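/- Let J be a diagram, (M_w, M_z) the pair of isometries defined by J on H_J, and μ ∈ ℂ with 0 < |μ| < 1. Then ran(μ − M_w) is closed, and its orthogonal complement, which equals ker(conj(μ) − M_w*), is the closed span of the vectors e_j^μ := Σ_{i ≥ M_j} conj(μ)^{i−M_j} e_{(i,j)} taken over all j ∈ ℤ with M_j ∈ ℤ (rows with M_j = −∞ contribute nothing; these vectors are pairwise orthogonal, each of norm (1−|μ|²)^{−1/2}). -/

import Mathlib

open scoped ENNReal ComplexConjugate InnerProductSpace
open Filter

noncomputable section

namespace TaylorDiagram

/-- A diagram: a subset of ℤ² closed under adding ℕ². -/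
def IsDiagram (J : Set (ℤ × ℤ)) : Prop :=
  ∀ p ∈ J, ∀ k l : ℕ, (p.1 + (k : ℤ), p.2 + (l : ℤ)) ∈ J

/-- Translate of a set of ℤ² by a vector. -/
def tr (v : ℤ × ℤ) (J : Set (ℤ × ℤ)) : Set (ℤ × ℤ) :=
  (fun p => (v.1 + p.1, v.2 + p.2)) '' J

def Equivalent (J₁ J₂ : Set (ℤ × ℤ)) : Prop := ∃ v : ℤ × ℤ, J₁ = tr v J₂

/-- Simple diagrams: translation equivalent to ℤ², ℤ₊², ℤ₊×ℤ or ℤ×ℤ₊. -/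
def Simple (J : Set (ℤ × ℤ)) : Prop :=
  Equivalent J Set.univ ∨ Equivalent J {p | 0 < p.1 ∧ 0 < p.2} ∨
    Equivalent J {p | 0 < p.1} ∨ Equivalent J {p | 0 < p.2}

/-- The Hilbert space ℓ²(J). -/
abbrev HJ (J : Set (ℤ × ℤ)) : Type := lp (fun _ : J => ℂ) 2

/-- Canonical orthonormal basis vectors of ℓ²(J). -/
def e (J : Set (ℤ × ℤ)) (p : J) : HJ J := lp.single 2 p 1

/-- `Mw` is the horizontal shift on ℓ²(J). -/
def IsShiftW (J : Set (ℤ × ℤ)) (Mw : HJ J →L[ℂ] HJ J) : Prop :=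
  ∀ (p : ℤ × ℤ) (hp : p ∈ J) (hp' : (p.1 + 1, p.2) ∈ J),
    Mw (e J ⟨p, hp⟩) = e J ⟨(p.1 + 1, p.2), hp'⟩

/-- `Mz` is the vertical shift on ℓ²(J). -/
def IsShiftZ (J : Set (ℤ × ℤ)) (Mz : HJ J →L[ℂ] HJ J) : Prop :=
  ∀ (p : ℤ × ℤ) (hp : p ∈ J) (hp' : (p.1, p.2 + 1) ∈ J),
    Mz (e J ⟨p, hp⟩) = e J ⟨(p.1, p.2 + 1), hp'⟩

section Conditions

variable {H : Type*} [NormedAddCommGroup H] [InnerProductSpace ℂ H]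

/-- Condition (T1) of exactness of the Koszul complex. -/
def CondT1 (A B : H →L[ℂ] H) : Prop :=
  LinearMap.ker (A : H →ₗ[ℂ] H) ⊓ LinearMap.ker (B : H →ₗ[ℂ] H) = ⊥

/-- Condition (T2) of exactness of the Koszul complex. -/
def CondT2 (A B : H →L[ℂ] H) : Prop :=
  ∀ h₁ h₂ : H, A h₂ = B h₁ → ∃ h : H, h₁ = A h ∧ h₂ = B h

/-- Condition (T3) of exactness of the Koszul complex. -/
def CondT3 (A B : H →L[ℂ] H) : Prop :=
  LinearMap.range (A : H →ₗ[ℂ] H) ⊔ LinearMap.range (B : H →ₗ[ℂ] H) = ⊤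

/-- Exactness of the (short) Koszul complex of a pair. -/
def KoszulExact (A B : H →L[ℂ] H) : Prop :=
  CondT1 A B ∧ CondT2 A B ∧ CondT3 A B

/-- The Taylor spectrum of a commuting pair. -/
def taylorSpectrum (A B : H →L[ℂ] H) : Set (ℂ × ℂ) :=
  {p | ¬ KoszulExact (p.1 • (1 : H →L[ℂ] H) - A) (p.2 • (1 : H →L[ℂ] H) - B)}

/-- Γ₂: the set of points where (T2) fails. -/
def Gamma2 (A B : H →L[ℂ] H) : Set (ℂ × ℂ) :=
  {p | ¬ CondT2 (p.1 • (1 : H →L[ℂ] H) - A) (p.2 • (1 : H →L[ℂ] H) - B)}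

/-- Γ₃: the set of points where (T3) fails. -/
def Gamma3 (A B : H →L[ℂ] H) : Set (ℂ × ℂ) :=
  {p | ¬ CondT3 (p.1 • (1 : H →L[ℂ] H) - A) (p.2 • (1 : H →L[ℂ] H) - B)}

end Conditions

/-- The vectors `e_j^μ = Σ_{i ≥ M_j} conj(μ)^{i−M_j} e_{(i,j)}`, one for each row `j` of
the diagram whose row is a genuine half-line `[M_j, ∞)` with `M_j ∈ ℤ`, written out in
coordinates. -/
def kerVecs (J : Set (ℤ × ℤ)) (μ : ℂ) : Set (HJ J) :=
  {v : HJ J | ∃ j mj : ℤ, (∀ i : ℤ, ((i, j) ∈ J ↔ mj ≤ i)) ∧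
    ∀ p : J, v p =
      if (p : ℤ × ℤ).2 = j ∧ mj ≤ (p : ℤ × ℤ).1 then
        (starRingEnd ℂ μ) ^ ((p : ℤ × ℤ).1 - mj).toNat else 0}

section Aux

variable {J : Set (ℤ × ℤ)} {μ : ℂ}

lemma row_up (hJ : IsDiagram J) {i j : ℤ} (h : (i, j) ∈ J) {i' : ℤ} (hle : i ≤ i') :
    (i', j) ∈ J := by
  have := hJ (i, j) h (i' - i).toNat 0
  simpa [Int.toNat_of_nonneg (sub_nonneg.mpr hle)] using this

lemma mem_shift (hJ : IsDiagram J) (p : J) : ((p : ℤ × ℤ).1 + 1, (p : ℤ × ℤ).2) ∈ J :=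
  row_up hJ (by exact (Prod.mk.eta ▸ p.2 : ((p : ℤ × ℤ).1, (p : ℤ × ℤ).2) ∈ J)) (by omega)

/-- the shift on indices -/
def sig (hJ : IsDiagram J) (p : J) : J :=
  ⟨((p : ℤ × ℤ).1 + 1, (p : ℤ × ℤ).2), mem_shift hJ p⟩

lemma lp_ext {f g : HJ J} (h : ∀ p : J, f p = g p) : f = g := by
  apply lp.ext ?_
  funext p; exact h p

lemma coord_eq_inner (x : HJ J) (p : J) : ⟪e J p, x⟫_ℂ = x p := by
  classical
  rw [e, lp.inner_single_left]
  simp [RCLike.inner_apply]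

lemma Mw_apply_e (hJ : IsDiagram J) {Mw : HJ J →L[ℂ] HJ J} (hMw : IsShiftW J Mw) (p : J) :
    Mw (e J p) = e J (sig hJ p) := by
  have := hMw (p : ℤ × ℤ) p.2 (mem_shift hJ p)
  simpa [sig] using this

lemma sig_inj (hJ : IsDiagram J) : Function.Injective (sig hJ) := by
  intro a b h
  have h1 := congrArg (fun p : J => (p : ℤ × ℤ).1) h
  have h2 := congrArg (fun p : J => (p : ℤ × ℤ).2) h
  simp only [sig] at h1 h2
  apply Subtype.ext
  rw [Prod.ext_iff]
  exact ⟨by omega, h2⟩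

lemma adjoint_coord (hJ : IsDiagram J) {Mw : HJ J →L[ℂ] HJ J} (hMw : IsShiftW J Mw)
    (x : HJ J) (p : J) : (ContinuousLinearMap.adjoint Mw x) p = x (sig hJ p) := by
  rw [← coord_eq_inner, ContinuousLinearMap.adjoint_inner_right, Mw_apply_e hJ hMw,
    coord_eq_inner]

lemma orthonormal_e : Orthonormal ℂ (e J) := by
  classical
  rw [orthonormal_iff_ite]
  intro i j
  rw [e, e, lp.inner_single_left, lp.single_apply]
  by_cases h : i = j <;> simp [h, RCLike.inner_apply, eq_comm]

lemma dense_span_e :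
    Dense ((Submodule.span ℂ (Set.range (e J)) : Submodule ℂ (HJ J)) : Set (HJ J)) := by
  rw [dense_iff_closure_eq]
  apply Set.eq_univ_of_forall
  intro x
  have hs : HasSum (fun p : J => lp.single 2 p (x p)) x := lp.hasSum_single ENNReal.ofNat_ne_top x
  have ht : Tendsto (fun s : Finset J => ∑ p ∈ s, lp.single 2 p (x p)) atTop (nhds x) := hs
  refine mem_closure_of_tendsto ht (Filter.Eventually.of_forall fun s => ?_)
  refine Submodule.sum_mem _ fun p _ => ?_
  have : lp.single 2 p (x p) = (x p) • e J p := by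
    rw [e, ← lp.single_smul]; norm_num
  rw [this]
  exact Submodule.smul_mem _ _ (Submodule.subset_span ⟨p, rfl⟩)

lemma isometry_of_e_maps {T : HJ J →L[ℂ] HJ J} {σ : J → J} (hσ : Function.Injective σ)
    (hT : ∀ p, T (e J p) = e J (σ p)) (x : HJ J) : ‖T x‖ = ‖x‖ := by
  have horth : Orthonormal ℂ (fun p => e J (σ p)) := orthonormal_e.comp σ hσ
  have key : ∀ y ∈ Submodule.span ℂ (Set.range (e J)), ‖T y‖ = ‖y‖ := by
    intro y hy
    rw [← Finsupp.range_linearCombination (R := ℂ), LinearMap.mem_range] at hy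
    obtain ⟨l, rfl⟩ := hy
    have h1 : T (Finsupp.linearCombination ℂ (e J) l) =
        Finsupp.linearCombination ℂ (fun p => e J (σ p)) l := by
      rw [Finsupp.linearCombination_apply, Finsupp.linearCombination_apply, map_finsuppSum]
      simp [hT]
    rw [h1]
    have h2 := horth.inner_finsupp_eq_sum_left l l
    have h3 := orthonormal_e (J := J) |>.inner_finsupp_eq_sum_left l l
    have hsq : ‖Finsupp.linearCombination ℂ (fun p => e J (σ p)) l‖ ^ 2
        = ‖Finsupp.linearCombination ℂ (e J) l‖ ^ 2 := by
      have e1 := @norm_sq_eq_re_inner ℂ _ _ _ _ (Finsupp.linearCombination ℂ (fun p => e J (σ p)) l)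
      have e2 := @norm_sq_eq_re_inner ℂ _ _ _ _ (Finsupp.linearCombination ℂ (e J) l)
      rw [e1, e2, h2, h3]
    exact (sq_eq_sq₀ (norm_nonneg _) (norm_nonneg _)).mp hsq
  have hc : Continuous (fun y : HJ J => ‖T y‖ - ‖y‖) := T.continuous.norm.sub continuous_norm
  have hz : ∀ y ∈ (Submodule.span ℂ (Set.range (e J)) : Set (HJ J)),
      (fun y : HJ J => ‖T y‖ - ‖y‖) y = 0 := by
    intro y hy; simp [key y hy]
  have heq := Continuous.ext_on dense_span_e hc (continuous_const (y := (0:ℝ)))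
    (fun y hy => by simpa using hz y hy)
  have := congrFun heq x
  simpa [sub_eq_zero] using this

lemma closed_range_of_isometry {H : Type*} [NormedAddCommGroup H] [InnerProductSpace ℂ H]
    [CompleteSpace H] (T : H →L[ℂ] H) {μ : ℂ} (hμ1 : ‖μ‖ < 1)
    (hT : ∀ x, ‖T x‖ = ‖x‖) :
    IsClosed ((LinearMap.range ((μ • (1 : H →L[ℂ] H) - T : H →L[ℂ] H) : H →ₗ[ℂ] H) : Submodule ℂ H) : Set H) := by
  set S := μ • (1 : H →L[ℂ] H) - T
  have hb : ∀ x, (1 - ‖μ‖) * ‖x‖ ≤ ‖S x‖ := by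
    intro x
    have h1 : ‖S x‖ = ‖T x - μ • x‖ := by
      rw [show S x = μ • x - T x by simp [S]]; rw [norm_sub_rev]
    rw [h1]
    have := norm_sub_norm_le (T x) (μ • x)
    have h2 : ‖μ • x‖ = ‖μ‖ * ‖x‖ := norm_smul _ _
    nlinarith [hT x, norm_nonneg x]
  have hK : (0:ℝ) < 1 - ‖μ‖ := by linarith
  have anti : AntilipschitzWith (⟨(1 - ‖μ‖)⁻¹, by positivity⟩ : NNReal) S := by
    apply ContinuousLinearMap.antilipschitz_of_bound
    intro x
    show ‖x‖ ≤ (1 - ‖μ‖)⁻¹ * ‖S x‖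
    calc ‖x‖ ≤ (1 - ‖μ‖)⁻¹ * ((1 - ‖μ‖) * ‖x‖) := by
          rw [← mul_assoc, inv_mul_cancel₀ hK.ne', one_mul]
      _ ≤ (1 - ‖μ‖)⁻¹ * ‖S x‖ := by
          apply mul_le_mul_of_nonneg_left (hb x) (by positivity)
  have h := anti.isClosed_range S.uniformContinuous
  have hset : ((LinearMap.range (S : H →ₗ[ℂ] H) : Submodule ℂ H) : Set H) = Set.range S :=
    LinearMap.coe_range _
  rw [hset]
  exact h

lemma adjoint_smul_one_sub {H : Type*} [NormedAddCommGroup H] [InnerProductSpace ℂ H]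
    [CompleteSpace H] (T : H →L[ℂ] H) (μ : ℂ) :
    ContinuousLinearMap.adjoint (μ • (1 : H →L[ℂ] H) - T) =
      (starRingEnd ℂ μ) • (1 : H →L[ℂ] H) - ContinuousLinearMap.adjoint T := by
  rw [map_sub]
  congr 1
  rw [LinearIsometryEquiv.map_smulₛₗ]
  congr 1
  calc ContinuousLinearMap.adjoint (1 : H →L[ℂ] H)
      = ContinuousLinearMap.adjoint (ContinuousLinearMap.id ℂ H) := rfl
    _ = ContinuousLinearMap.id ℂ H := ContinuousLinearMap.adjoint_id
    _ = 1 := rfl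

lemma orthogonal_range_eq_ker_adjoint {H : Type*} [NormedAddCommGroup H]
    [InnerProductSpace ℂ H] [CompleteSpace H] (S : H →L[ℂ] H) :
    (LinearMap.range (S : H →ₗ[ℂ] H))ᗮ = LinearMap.ker (ContinuousLinearMap.adjoint S : H →ₗ[ℂ] H) := by
  ext x
  rw [Submodule.mem_orthogonal, LinearMap.mem_ker]
  constructor
  · intro h
    have h' : ∀ y, ⟪y, (ContinuousLinearMap.adjoint S) x⟫_ℂ = 0 := by
      intro y
      rw [ContinuousLinearMap.adjoint_inner_right]
      exact h (S y) (LinearMap.mem_range_self _ y)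
    exact inner_self_eq_zero.mp (h' ((ContinuousLinearMap.adjoint S) x))
  · intro h u hu
    obtain ⟨y, rfl⟩ := hu
    rw [ContinuousLinearMap.coe_coe] at h ⊢
    rw [← ContinuousLinearMap.adjoint_inner_right, h, inner_zero_right]

lemma norm_sq_lt_one (hμ1 : ‖μ‖ < 1) : ‖μ‖ ^ 2 < 1 := by
  nlinarith [norm_nonneg μ]

end Aux

section Row

variable {J : Set (ℤ × ℤ)} {μ : ℂ} {j mj : ℤ}
variable (hrow : ∀ i : ℤ, ((i, j) ∈ J ↔ mj ≤ i))

def rowEmb (k : ℕ) : J := ⟨(mj + k, j), (hrow _).mpr (by omega)⟩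

lemma rowEmb_inj : Function.Injective (rowEmb hrow) := by
  intro a b h
  have := congrArg (fun p : J => (p : ℤ × ℤ).1) h
  simp only [rowEmb] at this
  omega

lemma kerVec_coord {v : HJ J}
    (hv : ∀ p : J, v p = if (p : ℤ × ℤ).2 = j ∧ mj ≤ (p : ℤ × ℤ).1 then
        (starRingEnd ℂ μ) ^ ((p : ℤ × ℤ).1 - mj).toNat else 0) (k : ℕ) :
    v (rowEmb hrow k) = (starRingEnd ℂ μ) ^ k := by
  rw [hv]
  rw [if_pos ⟨rfl, by simp only [rowEmb]; omega⟩]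
  congr 1
  simp only [rowEmb]
  omega

lemma kerVec_support {v : HJ J}
    (hv : ∀ p : J, v p = if (p : ℤ × ℤ).2 = j ∧ mj ≤ (p : ℤ × ℤ).1 then
        (starRingEnd ℂ μ) ^ ((p : ℤ × ℤ).1 - mj).toNat else 0)
    {p : J} (hp : p ∉ Set.range (rowEmb hrow)) : v p = 0 := by
  rw [hv]
  rw [if_neg]
  rintro ⟨h1, h2⟩
  exact hp ⟨((p : ℤ × ℤ).1 - mj).toNat, by
    apply Subtype.ext
    simp only [rowEmb]
    have : (mj + (((p : ℤ × ℤ).1 - mj).toNat : ℤ)) = (p : ℤ × ℤ).1 := by omega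
    rw [this, ← h1]⟩

include hrow in
lemma kerVec_norm (hμ1 : ‖μ‖ < 1) {v : HJ J}
    (hv : ∀ p : J, v p = if (p : ℤ × ℤ).2 = j ∧ mj ≤ (p : ℤ × ℤ).1 then
        (starRingEnd ℂ μ) ^ ((p : ℤ × ℤ).1 - mj).toNat else 0) :
    ‖v‖ = (Real.sqrt (1 - ‖μ‖ ^ 2))⁻¹ := by
  have h2 : (0:ℝ) < (2:ℝ≥0∞).toReal := by norm_num
  have hts := lp.norm_rpow_eq_tsum h2 v
  have htoReal : (2:ℝ≥0∞).toReal = (2:ℝ) := by norm_num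
  rw [htoReal] at hts
  have hsupp : Function.support (fun p : J => ‖v p‖ ^ (2:ℝ)) ⊆ Set.range (rowEmb hrow) := by
    intro p hp
    by_contra hmem
    apply hp
    simp only [kerVec_support hrow hv hmem, norm_zero]
    rw [Real.zero_rpow (by norm_num)]
  have hre := (rowEmb_inj hrow).tsum_eq hsupp
  rw [← hre] at hts
  have hterm : ∀ k : ℕ, ‖v (rowEmb hrow k)‖ ^ (2:ℝ) = (‖μ‖ ^ 2) ^ k := by
    intro k
    rw [kerVec_coord hrow hv k]
    rw [norm_pow, RCLike.norm_conj]
    rw [show ((‖μ‖ ^ k) ^ (2:ℝ)) = (‖μ‖ ^ k) ^ (2:ℕ) by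
      rw [← Real.rpow_natCast (‖μ‖ ^ k) 2]; norm_num]
    rw [← pow_mul, ← pow_mul']
  simp only [hterm] at hts
  rw [tsum_geometric_of_lt_one (by positivity) (norm_sq_lt_one hμ1)] at hts
  have hnn : (0:ℝ) ≤ ‖v‖ := norm_nonneg v
  have hv2 : ‖v‖ = Real.sqrt ((1 - ‖μ‖ ^ 2)⁻¹) := by
    rw [← hts]
    rw [show (‖v‖ ^ (2:ℝ)) = ‖v‖ ^ (2:ℕ) by
      rw [← Real.rpow_natCast ‖v‖ 2]; norm_num]
    rw [Real.sqrt_sq hnn]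
  rw [hv2, Real.sqrt_inv]

include hrow in
lemma inner_kerVec_ker (hμ1 : ‖μ‖ < 1) {v z : HJ J}
    (hv : ∀ p : J, v p = if (p : ℤ × ℤ).2 = j ∧ mj ≤ (p : ℤ × ℤ).1 then
        (starRingEnd ℂ μ) ^ ((p : ℤ × ℤ).1 - mj).toNat else 0)
    (hz : ∀ k : ℕ, z (rowEmb hrow k) = (starRingEnd ℂ μ) ^ k * z (rowEmb hrow 0)) :
    ⟪v, z⟫_ℂ = (1 - μ * starRingEnd ℂ μ)⁻¹ * z (rowEmb hrow 0) := by
  have hinner : ⟪v, z⟫_ℂ = ∑' p : J, (starRingEnd ℂ) (v p) * z p := by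
    rw [lp.inner_eq_tsum]
    refine tsum_congr fun p => ?_
    rw [RCLike.inner_apply]
    ring
  have hsupp : Function.support (fun p : J => (starRingEnd ℂ) (v p) * z p)
      ⊆ Set.range (rowEmb hrow) := by
    intro p hp
    by_contra hmem
    apply hp
    simp [kerVec_support hrow hv hmem]
  have hre := (rowEmb_inj hrow).tsum_eq hsupp
  rw [hinner, ← hre]
  have hterm : ∀ k : ℕ, (starRingEnd ℂ) (v (rowEmb hrow k)) * z (rowEmb hrow k)
      = (μ * starRingEnd ℂ μ) ^ k * z (rowEmb hrow 0) := by
    intro k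
    rw [kerVec_coord hrow hv k, hz k, map_pow, RingHomCompTriple.comp_apply]
    rw [← mul_assoc, ← mul_pow]
    rfl
  simp only [hterm]
  rw [tsum_mul_right, tsum_geometric_of_norm_lt_one (by
    rw [norm_mul, RCLike.norm_conj]
    nlinarith [norm_nonneg μ])]

include hrow in
lemma exists_kerVec (hμ1 : ‖μ‖ < 1) :
    ∃ v : HJ J, v ∈ kerVecs J μ ∧ ∀ p : J,
      v p = if (p : ℤ × ℤ).2 = j ∧ mj ≤ (p : ℤ × ℤ).1 then
        (starRingEnd ℂ μ) ^ ((p : ℤ × ℤ).1 - mj).toNat else 0 := by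
  classical
  set F : ∀ _ : J, ℂ := fun p => if (p : ℤ × ℤ).2 = j ∧ mj ≤ (p : ℤ × ℤ).1 then
        (starRingEnd ℂ μ) ^ ((p : ℤ × ℤ).1 - mj).toNat else 0 with hF
  have hFsupp : ∀ p : J, p ∉ Set.range (rowEmb hrow) → F p = 0 := by
    intro p hp
    rw [hF]
    simp only
    rw [if_neg]
    rintro ⟨h1, h2⟩
    exact hp ⟨((p : ℤ × ℤ).1 - mj).toNat, by
      apply Subtype.ext
      simp only [rowEmb]
      have : (mj + (((p : ℤ × ℤ).1 - mj).toNat : ℤ)) = (p : ℤ × ℤ).1 := by omega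
      rw [this, ← h1]⟩
  have hmem : Memℓp F 2 := by
    apply memℓp_gen
    have hiff := (rowEmb_inj hrow).summable_iff
      (f := fun p : J => ‖F p‖ ^ (2:ℝ≥0∞).toReal) (fun p hp => by
        simp only [hFsupp p hp, norm_zero]
        exact Real.zero_rpow (by norm_num))
    rw [← hiff]
    apply Summable.congr (f := fun k : ℕ => (‖μ‖ ^ 2) ^ k)
    · exact summable_geometric_of_lt_one (by positivity) (norm_sq_lt_one hμ1)
    · intro k
      have hFval : F (rowEmb hrow k) = (starRingEnd ℂ μ) ^ k := by
        show (if ((rowEmb hrow k : ℤ × ℤ).2 = j ∧ mj ≤ (rowEmb hrow k : ℤ × ℤ).1) then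
            (starRingEnd ℂ μ) ^ (((rowEmb hrow k : ℤ × ℤ)).1 - mj).toNat else 0) = _
        rw [if_pos ⟨rfl, by simp only [rowEmb]; omega⟩]
        congr 1
        simp only [rowEmb]
        omega
      simp only [Function.comp_apply, hFval, norm_pow, RCLike.norm_conj]
      rw [show ((‖μ‖ ^ k) ^ (2:ℝ≥0∞).toReal) = (‖μ‖ ^ k) ^ (2:ℕ) by
        rw [show (2:ℝ≥0∞).toReal = ((2:ℕ):ℝ) by norm_num, Real.rpow_natCast]]
      rw [← pow_mul, ← pow_mul']
  refine ⟨⟨F, hmem⟩, ⟨j, mj, hrow, fun p => rfl⟩, fun p => rfl⟩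

end Row

section Ker

variable {J : Set (ℤ × ℤ)} {μ : ℂ}

lemma mem_ker_iff (hJ : IsDiagram J) {Mw : HJ J →L[ℂ] HJ J} (hMw : IsShiftW J Mw)
    (x : HJ J) :
    x ∈ LinearMap.ker (((starRingEnd ℂ μ) • (1 : HJ J →L[ℂ] HJ J) -
      ContinuousLinearMap.adjoint Mw : HJ J →L[ℂ] HJ J) : HJ J →ₗ[ℂ] HJ J) ↔
    ∀ p : J, x (sig hJ p) = (starRingEnd ℂ μ) * x p := by
  rw [LinearMap.mem_ker, ContinuousLinearMap.coe_coe]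
  have hcoord : ∀ p : J, (((starRingEnd ℂ μ) • (1 : HJ J →L[ℂ] HJ J) -
      ContinuousLinearMap.adjoint Mw) x) p = (starRingEnd ℂ μ) * x p - x (sig hJ p) := by
    intro p
    rw [ContinuousLinearMap.sub_apply, ContinuousLinearMap.smul_apply,
      ContinuousLinearMap.one_apply]
    have := lp.coeFn_sub ((starRingEnd ℂ μ) • x) (ContinuousLinearMap.adjoint Mw x)
    rw [show ((((starRingEnd ℂ μ) • x - ContinuousLinearMap.adjoint Mw x) : HJ J) p)
        = ((starRingEnd ℂ μ) • x) p - (ContinuousLinearMap.adjoint Mw x) p by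
      rw [this]; rfl]
    rw [adjoint_coord hJ hMw x p]
    have hs := lp.coeFn_smul (starRingEnd ℂ μ) x
    rw [show (((starRingEnd ℂ μ) • x : HJ J) p) = (starRingEnd ℂ μ) * x p by rw [hs]; rfl]
  constructor
  · intro h p
    have := hcoord p
    rw [h] at this
    have h0 : ((0 : HJ J) : ∀ _ : J, ℂ) p = 0 := by rw [lp.coeFn_zero]; rfl
    rw [h0] at this
    linear_combination this
  · intro h
    apply lp_ext
    intro p
    rw [hcoord p, h p]
    have h0 : ((0 : HJ J) : ∀ _ : J, ℂ) p = 0 := by rw [lp.coeFn_zero]; rfl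
    rw [h0]
    ring

lemma ker_step (hJ : IsDiagram J) {x : HJ J} {c : ℂ}
    (hx : ∀ p : J, x (sig hJ p) = c * x p) (k : ℕ) :
    ∀ p q : J, (q : ℤ × ℤ).1 = (p : ℤ × ℤ).1 + k → (q : ℤ × ℤ).2 = (p : ℤ × ℤ).2 →
      x q = c ^ k * x p := by
  induction k with
  | zero =>
      intro p q h1 h2
      have : q = p := Subtype.ext (Prod.ext_iff.mpr ⟨by omega, h2⟩)
      rw [this]
      simp
  | succ k ih =>
      intro p q h1 h2
      have hpJ : ((p : ℤ × ℤ).1, (p : ℤ × ℤ).2) ∈ J := Prod.mk.eta ▸ p.2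
      have hrJ : ((q : ℤ × ℤ).1 - 1, (p : ℤ × ℤ).2) ∈ J := row_up hJ hpJ (by omega)
      set r : J := ⟨((q : ℤ × ℤ).1 - 1, (p : ℤ × ℤ).2), hrJ⟩ with hr
      have hsr : sig hJ r = q := by
        apply Subtype.ext
        rw [Prod.ext_iff]
        constructor
        · simp only [sig, hr]; omega
        · simp only [sig, hr]; omega
      have hstep := hx r
      rw [hsr] at hstep
      rw [hstep, ih p r (by simp only [hr]; omega) (by simp only [hr])]
      ring

lemma ker_full_row (hJ : IsDiagram J) (hμ1 : ‖μ‖ < 1) {x : HJ J}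
    (hx : ∀ p : J, x (sig hJ p) = (starRingEnd ℂ μ) * x p) (p : J)
    (hall : ∀ i : ℤ, (i, (p : ℤ × ℤ).2) ∈ J) : x p = 0 := by
  have hbound : ∀ n : ℕ, ‖x p‖ ≤ ‖μ‖ ^ n * ‖x‖ := by
    intro n
    have hmem : ((p : ℤ × ℤ).1 - n, (p : ℤ × ℤ).2) ∈ J := hall _
    have hstep := ker_step hJ hx n ⟨((p : ℤ × ℤ).1 - n, (p : ℤ × ℤ).2), hmem⟩ p
      (by simp) (by simp)
    rw [hstep]
    rw [norm_mul, norm_pow, RCLike.norm_conj]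
    exact mul_le_mul_of_nonneg_left
      (lp.norm_apply_le_norm (by norm_num) x _) (by positivity)
  have hlim : Tendsto (fun n : ℕ => ‖μ‖ ^ n * ‖x‖) atTop (nhds 0) := by
    have := (tendsto_pow_atTop_nhds_zero_of_lt_one (norm_nonneg μ) hμ1).mul_const ‖x‖
    simpa using this
  have : ‖x p‖ ≤ 0 := ge_of_tendsto' hlim hbound
  simpa using norm_le_zero_iff.mp this

lemma kerVecs_subset_ker (hJ : IsDiagram J) {Mw : HJ J →L[ℂ] HJ J} (hMw : IsShiftW J Mw) :
    kerVecs J μ ⊆ (LinearMap.ker (((starRingEnd ℂ μ) • (1 : HJ J →L[ℂ] HJ J) -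
      ContinuousLinearMap.adjoint Mw : HJ J →L[ℂ] HJ J) : HJ J →ₗ[ℂ] HJ J) : Set (HJ J)) := by
  rintro v ⟨j, mj, hrow, hv⟩
  show v ∈ LinearMap.ker (((starRingEnd ℂ μ) • (1 : HJ J →L[ℂ] HJ J) -
      ContinuousLinearMap.adjoint Mw : HJ J →L[ℂ] HJ J) : HJ J →ₗ[ℂ] HJ J)
  rw [mem_ker_iff hJ hMw]
  intro p
  by_cases hpj : (p : ℤ × ℤ).2 = j
  · have hpJ : ((p : ℤ × ℤ).1, (p : ℤ × ℤ).2) ∈ J := Prod.mk.eta ▸ p.2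
    rw [hpj] at hpJ
    have hmj : mj ≤ (p : ℤ × ℤ).1 := (hrow _).mp hpJ
    rw [hv (sig hJ p), hv p, if_pos (⟨(by simpa [sig] using hpj),
      (by simp only [sig]; omega)⟩ : ((sig hJ p : ℤ × ℤ).2 = j ∧ mj ≤ (sig hJ p : ℤ × ℤ).1)),
      if_pos ⟨hpj, hmj⟩]
    rw [show ((sig hJ p : ℤ × ℤ).1 - mj).toNat = ((p : ℤ × ℤ).1 - mj).toNat + 1 by
      simp only [sig]; omega]
    rw [pow_succ]
    ring
  · rw [hv (sig hJ p), hv p, if_neg (by simp only [sig]; tauto),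
      if_neg (by tauto)]
    ring

end Ker

/-- For a diagram `J` and `0 < |μ| < 1`, the range of `μ − M_w` is closed and its
orthogonal complement, which is `ker(μ̄ − M_w*)`, is the closed span of the vectors
`e_j^μ` (rows with `M_j = −∞` contribute nothing); these vectors are pairwise orthogonal,
each of norm `(1 − |μ|²)^{−1/2}`. -/
theorem stmt13 (J : Set (ℤ × ℤ)) (hJ : IsDiagram J)
    (Mw : HJ J →L[ℂ] HJ J) (hMw : IsShiftW J Mw)
    (μ : ℂ) (hμ0 : 0 < ‖μ‖) (hμ1 : ‖μ‖ < 1) :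
    IsClosed ((LinearMap.range (((μ • (1 : HJ J →L[ℂ] HJ J) - Mw : HJ J →L[ℂ] HJ J) : HJ J →ₗ[ℂ] HJ J)) :
        Submodule ℂ (HJ J)) : Set (HJ J)) ∧
    (LinearMap.range (((μ • (1 : HJ J →L[ℂ] HJ J) - Mw : HJ J →L[ℂ] HJ J) : HJ J →ₗ[ℂ] HJ J)))ᗮ =
      LinearMap.ker ((((starRingEnd ℂ μ) • (1 : HJ J →L[ℂ] HJ J) -
        ContinuousLinearMap.adjoint Mw : HJ J →L[ℂ] HJ J) : HJ J →ₗ[ℂ] HJ J)) ∧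
    LinearMap.ker ((((starRingEnd ℂ μ) • (1 : HJ J →L[ℂ] HJ J) -
        ContinuousLinearMap.adjoint Mw : HJ J →L[ℂ] HJ J) : HJ J →ₗ[ℂ] HJ J)) =
      (Submodule.span ℂ (kerVecs J μ)).topologicalClosure ∧
    (∀ v ∈ kerVecs J μ, ‖v‖ = (Real.sqrt (1 - ‖μ‖ ^ 2))⁻¹) ∧
    (∀ v ∈ kerVecs J μ, ∀ w ∈ kerVecs J μ, v ≠ w → ⟪v, w⟫_ℂ = 0) := by
  have hMwiso : ∀ x, ‖Mw x‖ = ‖x‖ := isometry_of_e_maps (sig_inj hJ) (Mw_apply_e hJ hMw)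
  refine ⟨closed_range_of_isometry Mw hμ1 hMwiso, ?_, ?_, ?_, ?_⟩
  · rw [orthogonal_range_eq_ker_adjoint, adjoint_smul_one_sub]
  · -- kernel = closure of span of kerVecs
    set K := (Submodule.span ℂ (kerVecs J μ)).topologicalClosure with hK
    have hKker : K ≤ LinearMap.ker (((starRingEnd ℂ μ) • (1 : HJ J →L[ℂ] HJ J) -
        ContinuousLinearMap.adjoint Mw : HJ J →L[ℂ] HJ J) : HJ J →ₗ[ℂ] HJ J) :=
      Submodule.topologicalClosure_minimal _
        (Submodule.span_le.mpr (kerVecs_subset_ker hJ hMw))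
        (ContinuousLinearMap.isClosed_ker _)
    apply le_antisymm ?_ hKker
    intro x hx
    haveI : CompleteSpace K :=
      (Submodule.isClosed_topologicalClosure (Submodule.span ℂ (kerVecs J μ))).completeSpace_coe
    obtain ⟨y, hy, z, hz, hxyz⟩ := K.exists_add_mem_mem_orthogonal x
    have hzker : z ∈ LinearMap.ker (((starRingEnd ℂ μ) • (1 : HJ J →L[ℂ] HJ J) -
        ContinuousLinearMap.adjoint Mw : HJ J →L[ℂ] HJ J) : HJ J →ₗ[ℂ] HJ J) := by
      have := Submodule.sub_mem _ hx (hKker hy)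
      rwa [hxyz, add_sub_cancel_left] at this
    have hzrec : ∀ p : J, z (sig hJ p) = (starRingEnd ℂ μ) * z p :=
      (mem_ker_iff hJ hMw z).mp hzker
    have hz0 : z = 0 := by
      apply lp_ext
      intro p
      rw [show ((0 : HJ J) : ∀ _ : J, ℂ) p = 0 by rw [lp.coeFn_zero]; rfl]
      by_cases hfull : ∀ i : ℤ, (i, (p : ℤ × ℤ).2) ∈ J
      · exact ker_full_row hJ hμ1 hzrec p hfull
      · push_neg at hfull
        obtain ⟨i0, hi0⟩ := hfull
        have hbdd : ∃ b : ℤ, ∀ i : ℤ, (i, (p : ℤ × ℤ).2) ∈ J → b ≤ i := by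
          refine ⟨i0, fun i hi => ?_⟩
          by_contra hlt
          exact hi0 (row_up hJ hi (by omega))
        have hinh : ∃ i : ℤ, (i, (p : ℤ × ℤ).2) ∈ J :=
          ⟨(p : ℤ × ℤ).1, Prod.mk.eta ▸ p.2⟩
        obtain ⟨mj, hmjP, hmjle⟩ := Int.exists_least_of_bdd hbdd hinh
        have hrow : ∀ i : ℤ, ((i, (p : ℤ × ℤ).2) ∈ J ↔ mj ≤ i) :=
          fun i => ⟨hmjle i, fun h => row_up hJ hmjP h⟩
        obtain ⟨v, hvmem, hv⟩ := exists_kerVec hrow hμ1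
        have hvK : v ∈ K := Submodule.le_topologicalClosure _ (Submodule.subset_span hvmem)
        have hinner0 : ⟪v, z⟫_ℂ = 0 := (Submodule.mem_orthogonal K z).mp hz v hvK
        have hzrow : ∀ k : ℕ, z (rowEmb hrow k)
            = (starRingEnd ℂ μ) ^ k * z (rowEmb hrow 0) := fun k =>
          ker_step hJ hzrec k (rowEmb hrow 0) (rowEmb hrow k)
            (by simp [rowEmb]) (by simp [rowEmb])
        have hformula := inner_kerVec_ker hrow hμ1 hv hzrow
        rw [hinner0] at hformula
        have hne : (1 - μ * starRingEnd ℂ μ) ≠ 0 := by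
          have hnorm : ‖μ * (starRingEnd ℂ) μ‖ < 1 := by
            rw [norm_mul, RCLike.norm_conj]
            nlinarith [norm_nonneg μ]
          intro h0
          rw [sub_eq_zero] at h0
          rw [← h0] at hnorm
          simp at hnorm
        have hz00 : z (rowEmb hrow 0) = 0 := by
          rcases mul_eq_zero.mp hformula.symm with h | h
          · exact absurd h (inv_ne_zero hne)
          · exact h
        have hp1 : mj ≤ (p : ℤ × ℤ).1 := (hrow _).mp (Prod.mk.eta ▸ p.2)
        have hfin := ker_step hJ hzrec ((p : ℤ × ℤ).1 - mj).toNat (rowEmb hrow 0) p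
          (by simp [rowEmb]; omega) (by simp [rowEmb])
        rw [hfin, hz00, mul_zero]
    rw [hxyz, hz0, add_zero]
    exact hy
  · -- norms
    rintro v ⟨j, mj, hrow, hv⟩
    exact kerVec_norm hrow hμ1 hv
  · -- orthogonality
    rintro v ⟨j, mj, hrow, hv⟩ w ⟨j', mj', hrow', hw⟩ hvw
    by_cases hjj : j = j'
    · subst hjj
      have hmm : mj = mj' := le_antisymm
        ((hrow mj').mp ((hrow' mj').mpr le_rfl))
        ((hrow' mj).mp ((hrow mj).mpr le_rfl))
      subst hmm
      exact absurd (lp_ext (fun p => by rw [hv p, hw p])) hvw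
    · rw [lp.inner_eq_tsum]
      have hterm : ∀ p : J, ⟪v p, w p⟫_ℂ = 0 := by
        intro p
        by_cases hpj : (p : ℤ × ℤ).2 = j
        · rw [hw p, if_neg (fun hc => hjj (hpj.symm.trans hc.1))]
          exact inner_zero_right _
        · rw [hv p, if_neg (fun hc => hpj hc.1)]
          exact inner_zero_left _
      rw [show (fun p : J => ⟪v p, w p⟫_ℂ) = fun _ => (0:ℂ) from funext hterm]
      exact tsum_zero

end TaylorDiagram
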